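/- Let p ≠ q be probability distributions on Fin k with q of full rank. Then for every real α with α ≠ 0 and every δ with 0 < δ < 1, one has the strict inequality D_α((1−δ)·p + δ·q ‖ q) < D_α(p ‖ q) (as extended reals). -/

import Mathlib

open scoped BigOperators ENNReal Classical

noncomputable section

/-- A probability distribution on a finite type. -/
def IsProb {ι : Type*} [Fintype ι] (p : ι → ℝ) : Prop :=
  (∀ i, 0 ≤ p i) ∧ ∑ i, p i = 1

/-- Extended-real logarithm of an extended nonnegative real. -/
def elog (x : ℝ≥0∞) : EReal :=
  if x = 0 then ⊥ else if x = ⊤ then ⊤ else ((Real.log x.toReal : ℝ) : EReal)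

/-- The Rényi divergence `D_α(p‖q)`, valued in the extended reals, with the
conventions `0/0 = 0` and `a/0 = ∞` for `a > 0` built into the `ℝ≥0∞`-valued
terms `p i ^ α * q i ^ (1-α)`. -/
def renyiD {ι : Type*} [Fintype ι] (α : ℝ) (p q : ι → ℝ) : EReal :=
  if α = 0 then - elog (ENNReal.ofReal (∑ i ∈ Finset.univ.filter (fun i => p i ≠ 0), q i))
  else if α = 1 then (((∑ i, p i * (Real.log (p i) - Real.log (q i))) : ℝ) : EReal)
  else ((Real.sign α / (α - 1) : ℝ) : EReal) *
    elog (∑ i, (ENNReal.ofReal (p i)) ^ α * (ENNReal.ofReal (q i)) ^ (1 - α))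

/-! ### Auxiliary lemmas -/

/-- `x ↦ x ^ α` is strictly convex on `(0, ∞)` for negative `α`. -/
lemma aux_strictConvexOn_rpow_neg {α : ℝ} (hα : α < 0) :
    StrictConvexOn ℝ (Set.Ioi 0) fun x : ℝ => x ^ α := by
  refine ⟨convex_Ioi 0, fun x hx y hy hxy a b ha hb hab => ?_⟩
  have hx' : (0:ℝ) < x := hx
  have hy' : (0:ℝ) < y := hy
  have hmix : 0 < a * x + b * y := by positivity
  have h1 : a * Real.log x + b * Real.log y < Real.log (a * x + b * y) := by
    have := strictConcaveOn_log_Ioi.2 hx' hy' hxy ha hb hab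
    simpa [smul_eq_mul] using this
  have h2 : Real.log (a * x + b * y) * α < (a * Real.log x + b * Real.log y) * α :=
    mul_lt_mul_of_neg_right h1 hα
  have hre : (a * Real.log x + b * Real.log y) * α
      = a * (Real.log x * α) + b * (Real.log y * α) := by ring
  have h3 : Real.exp ((a * Real.log x + b * Real.log y) * α)
      ≤ a * Real.exp (Real.log x * α) + b * Real.exp (Real.log y * α) := by
    rw [hre]
    have := convexOn_exp.2 (Set.mem_univ (Real.log x * α)) (Set.mem_univ (Real.log y * α))
      ha.le hb.le hab
    simpa [smul_eq_mul] using this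
  calc (a • x + b • y) ^ α = Real.exp (Real.log (a * x + b * y) * α) := by
        rw [smul_eq_mul, smul_eq_mul, Real.rpow_def_of_pos hmix]
    _ < Real.exp ((a * Real.log x + b * Real.log y) * α) := Real.exp_lt_exp.2 h2
    _ ≤ a * Real.exp (Real.log x * α) + b * Real.exp (Real.log y * α) := h3
    _ = a • x ^ α + b • y ^ α := by
        rw [Real.rpow_def_of_pos hx', Real.rpow_def_of_pos hy']; simp [smul_eq_mul]

lemma aux_q_mul_div_rpow {p q α : ℝ} (hp : 0 ≤ p) (hq : 0 < q) :
    q * (p / q) ^ α = p ^ α * q ^ (1 - α) := by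
  have hqα : (0:ℝ) < q ^ α := Real.rpow_pos_of_pos hq α
  rw [Real.div_rpow hp hq.le, Real.rpow_sub hq, Real.rpow_one]
  field_simp

lemma aux_sum_q_self {k : ℕ} {α : ℝ} (q : Fin k → ℝ) (hq0 : ∀ i, 0 < q i)
    (hq1 : ∑ i, q i = 1) : ∑ i, q i ^ α * q i ^ (1 - α) = 1 := by
  have h : ∀ i ∈ Finset.univ, q i ^ α * q i ^ (1 - α) = q i := fun i _ => by
    rw [← Real.rpow_add (hq0 i)]; norm_num
  rw [Finset.sum_congr rfl h, hq1]

lemma aux_sum_rpow_pos {k : ℕ} (α : ℝ) (p q : Fin k → ℝ)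
    (hp0 : ∀ i, 0 ≤ p i) (hp1 : ∑ i, p i = 1) (hq0 : ∀ i, 0 < q i) :
    0 < ∑ i, p i ^ α * q i ^ (1 - α) := by
  obtain ⟨i, hi⟩ : ∃ i, 0 < p i := by
    by_contra h
    push_neg at h
    have h0 : ∑ i, p i = 0 :=
      Finset.sum_eq_zero fun i _ => le_antisymm (h i) (hp0 i)
    rw [hp1] at h0; norm_num at h0
  refine Finset.sum_pos' (fun j _ => ?_) ⟨i, Finset.mem_univ i, ?_⟩
  · exact mul_nonneg (Real.rpow_nonneg (hp0 j) _) (Real.rpow_nonneg (hq0 j).le _)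
  · exact mul_pos (Real.rpow_pos_of_pos hi _) (Real.rpow_pos_of_pos (hq0 i) _)

/-- Jensen (convex case): `∑ pᵢ^α qᵢ^(1-α) ≥ 1`. -/
lemma aux_one_le_sum_rpow {k : ℕ} {α : ℝ} {D : Set ℝ}
    (hf : ConvexOn ℝ D fun x : ℝ => x ^ α)
    (p q : Fin k → ℝ) (hp0 : ∀ i, 0 ≤ p i) (hp1 : ∑ i, p i = 1)
    (hq0 : ∀ i, 0 < q i) (hq1 : ∑ i, q i = 1)
    (hmem : ∀ i, p i / q i ∈ D) :
    1 ≤ ∑ i, p i ^ α * q i ^ (1 - α) := by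
  have hsum : ∑ i, q i • (p i / q i) = 1 := by
    rw [← hp1]
    refine Finset.sum_congr rfl fun i _ => ?_
    rw [smul_eq_mul, mul_comm, div_mul_cancel₀ _ (hq0 i).ne']
  have h := hf.map_sum_le (t := Finset.univ) (w := q) (p := fun i => p i / q i)
    (fun i _ => (hq0 i).le) hq1 (fun i _ => hmem i)
  calc (1:ℝ) = (∑ i, q i • (p i / q i)) ^ α := by rw [hsum, Real.one_rpow]
    _ ≤ ∑ i, q i • (p i / q i) ^ α := h
    _ = ∑ i, p i ^ α * q i ^ (1 - α) := Finset.sum_congr rfl fun i _ => by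
        rw [smul_eq_mul, aux_q_mul_div_rpow (hp0 i) (hq0 i)]

/-- Jensen (concave case): `∑ pᵢ^α qᵢ^(1-α) ≤ 1`. -/
lemma aux_sum_rpow_le_one {k : ℕ} {α : ℝ} {D : Set ℝ}
    (hf : ConcaveOn ℝ D fun x : ℝ => x ^ α)
    (p q : Fin k → ℝ) (hp0 : ∀ i, 0 ≤ p i) (hp1 : ∑ i, p i = 1)
    (hq0 : ∀ i, 0 < q i) (hq1 : ∑ i, q i = 1)
    (hmem : ∀ i, p i / q i ∈ D) :
    ∑ i, p i ^ α * q i ^ (1 - α) ≤ 1 := by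
  have hsum : ∑ i, q i • (p i / q i) = 1 := by
    rw [← hp1]
    refine Finset.sum_congr rfl fun i _ => ?_
    rw [smul_eq_mul, mul_comm, div_mul_cancel₀ _ (hq0 i).ne']
  have h := hf.le_map_sum (t := Finset.univ) (w := q) (p := fun i => p i / q i)
    (fun i _ => (hq0 i).le) hq1 (fun i _ => hmem i)
  calc ∑ i, p i ^ α * q i ^ (1 - α)
      = ∑ i, q i • (p i / q i) ^ α := Finset.sum_congr rfl fun i _ => by
        rw [smul_eq_mul, aux_q_mul_div_rpow (hp0 i) (hq0 i)]
    _ ≤ (∑ i, q i • (p i / q i)) ^ α := h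
    _ = 1 := by rw [hsum, Real.one_rpow]

/-- Strict mixing step, convex case. -/
lemma aux_sum_mix_lt {k : ℕ} {α δ : ℝ} {D : Set ℝ}
    (hf : StrictConvexOn ℝ D fun x : ℝ => x ^ α)
    (p q : Fin k → ℝ) (hq0 : ∀ i, 0 < q i)
    (hmemp : ∀ i, p i ∈ D) (hmemq : ∀ i, q i ∈ D)
    (i₀ : Fin k) (hi₀ : p i₀ ≠ q i₀) (hδ0 : 0 < δ) (hδ1 : δ < 1) :
    ∑ i, ((1 - δ) * p i + δ * q i) ^ α * q i ^ (1 - α)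
      < (1 - δ) * (∑ i, p i ^ α * q i ^ (1 - α))
        + δ * (∑ i, q i ^ α * q i ^ (1 - α)) := by
  have key : ∀ i, ((1 - δ) * p i + δ * q i) ^ α * q i ^ (1 - α)
      ≤ ((1 - δ) * (p i) ^ α + δ * (q i) ^ α) * q i ^ (1 - α) := fun i => by
    have h := hf.convexOn.2 (hmemp i) (hmemq i)
      (by linarith : (0:ℝ) ≤ 1 - δ) hδ0.le (by ring : (1 - δ) + δ = 1)
    exact mul_le_mul_of_nonneg_right (by simpa [smul_eq_mul] using h)
      (Real.rpow_nonneg (hq0 i).le _)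
  have hstrict : ((1 - δ) * p i₀ + δ * q i₀) ^ α * q i₀ ^ (1 - α)
      < ((1 - δ) * (p i₀) ^ α + δ * (q i₀) ^ α) * q i₀ ^ (1 - α) := by
    have h := hf.2 (hmemp i₀) (hmemq i₀) hi₀
      (by linarith : (0:ℝ) < 1 - δ) hδ0 (by ring : (1 - δ) + δ = 1)
    exact mul_lt_mul_of_pos_right (by simpa [smul_eq_mul] using h)
      (Real.rpow_pos_of_pos (hq0 i₀) _)
  calc ∑ i, ((1 - δ) * p i + δ * q i) ^ α * q i ^ (1 - α)
      < ∑ i, ((1 - δ) * (p i) ^ α + δ * (q i) ^ α) * q i ^ (1 - α) :=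
        Finset.sum_lt_sum (fun i _ => key i) ⟨i₀, Finset.mem_univ _, hstrict⟩
    _ = (1 - δ) * (∑ i, p i ^ α * q i ^ (1 - α))
        + δ * (∑ i, q i ^ α * q i ^ (1 - α)) := by
        rw [Finset.mul_sum, Finset.mul_sum, ← Finset.sum_add_distrib]
        exact Finset.sum_congr rfl fun i _ => by ring

/-- Strict mixing step, concave case. -/
lemma aux_sum_mix_gt {k : ℕ} {α δ : ℝ} {D : Set ℝ}
    (hf : StrictConcaveOn ℝ D fun x : ℝ => x ^ α)
    (p q : Fin k → ℝ) (hq0 : ∀ i, 0 < q i)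
    (hmemp : ∀ i, p i ∈ D) (hmemq : ∀ i, q i ∈ D)
    (i₀ : Fin k) (hi₀ : p i₀ ≠ q i₀) (hδ0 : 0 < δ) (hδ1 : δ < 1) :
    (1 - δ) * (∑ i, p i ^ α * q i ^ (1 - α))
        + δ * (∑ i, q i ^ α * q i ^ (1 - α))
      < ∑ i, ((1 - δ) * p i + δ * q i) ^ α * q i ^ (1 - α) := by
  have key : ∀ i, ((1 - δ) * (p i) ^ α + δ * (q i) ^ α) * q i ^ (1 - α)
      ≤ ((1 - δ) * p i + δ * q i) ^ α * q i ^ (1 - α) := fun i => by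
    have h := hf.concaveOn.2 (hmemp i) (hmemq i)
      (by linarith : (0:ℝ) ≤ 1 - δ) hδ0.le (by ring : (1 - δ) + δ = 1)
    exact mul_le_mul_of_nonneg_right (by simpa [smul_eq_mul] using h)
      (Real.rpow_nonneg (hq0 i).le _)
  have hstrict : ((1 - δ) * (p i₀) ^ α + δ * (q i₀) ^ α) * q i₀ ^ (1 - α)
      < ((1 - δ) * p i₀ + δ * q i₀) ^ α * q i₀ ^ (1 - α) := by
    have h := hf.2 (hmemp i₀) (hmemq i₀) hi₀
      (by linarith : (0:ℝ) < 1 - δ) hδ0 (by ring : (1 - δ) + δ = 1)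
    exact mul_lt_mul_of_pos_right (by simpa [smul_eq_mul] using h)
      (Real.rpow_pos_of_pos (hq0 i₀) _)
  calc (1 - δ) * (∑ i, p i ^ α * q i ^ (1 - α))
        + δ * (∑ i, q i ^ α * q i ^ (1 - α))
      = ∑ i, ((1 - δ) * (p i) ^ α + δ * (q i) ^ α) * q i ^ (1 - α) := by
        rw [Finset.mul_sum, Finset.mul_sum, ← Finset.sum_add_distrib]
        exact Finset.sum_congr rfl fun i _ => by ring
    _ < ∑ i, ((1 - δ) * p i + δ * q i) ^ α * q i ^ (1 - α) :=
        Finset.sum_lt_sum (fun i _ => key i) ⟨i₀, Finset.mem_univ _, hstrict⟩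

/-- `renyiD` in real terms, in the finite cases. -/
lemma aux_renyiD_eq {k : ℕ} (α : ℝ) (hα0 : α ≠ 0) (hα1 : α ≠ 1) (p q : Fin k → ℝ)
    (hp0 : ∀ i, 0 ≤ p i) (hq0 : ∀ i, 0 < q i)
    (hfin : ∀ i, 0 < p i ∨ 0 < α)
    (hs : 0 < ∑ i, p i ^ α * q i ^ (1 - α)) :
    renyiD α p q =
      (((Real.sign α / (α - 1)) * Real.log (∑ i, p i ^ α * q i ^ (1 - α)) : ℝ) : EReal) := by
  have hterm : ∀ i, (ENNReal.ofReal (p i)) ^ α * (ENNReal.ofReal (q i)) ^ (1 - α)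
      = ENNReal.ofReal (p i ^ α * q i ^ (1 - α)) := by
    intro i
    have h1 : (ENNReal.ofReal (p i)) ^ α = ENNReal.ofReal (p i ^ α) := by
      rcases hfin i with h | h
      · exact ENNReal.ofReal_rpow_of_pos h
      · exact ENNReal.ofReal_rpow_of_nonneg (hp0 i) h.le
    have h2 : (ENNReal.ofReal (q i)) ^ (1 - α) = ENNReal.ofReal (q i ^ (1 - α)) :=
      ENNReal.ofReal_rpow_of_pos (hq0 i)
    rw [h1, h2, ← ENNReal.ofReal_mul (Real.rpow_nonneg (hp0 i) _)]
  rw [renyiD, if_neg hα0, if_neg hα1, Finset.sum_congr rfl fun i _ => hterm i,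
    ← ENNReal.ofReal_sum_of_nonneg (fun i _ =>
      mul_nonneg (Real.rpow_nonneg (hp0 i) _) (Real.rpow_nonneg (hq0 i).le _))]
  rw [elog, if_neg (ENNReal.ofReal_pos.mpr hs).ne', if_neg ENNReal.ofReal_ne_top,
    ENNReal.toReal_ofReal hs.le, ← EReal.coe_mul]

/-- The KL-divergence rewritten through `x * log x`. -/
lemma aux_kl_eq {k : ℕ} (p q : Fin k → ℝ) (hp0 : ∀ i, 0 ≤ p i) (hq0 : ∀ i, 0 < q i) :
    ∑ i, p i * (Real.log (p i) - Real.log (q i))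
      = ∑ i, q i * ((p i / q i) * Real.log (p i / q i)) := by
  refine Finset.sum_congr rfl fun i _ => ?_
  rcases eq_or_lt_of_le (hp0 i) with h | h
  · rw [← h]; simp
  · rw [Real.log_div h.ne' (hq0 i).ne']
    field_simp
    rw [mul_div_cancel_right₀ _ (hq0 i).ne']

theorem renyiD_strict_decrease_of_mixing {k : ℕ} (p q : Fin k → ℝ)
    (hp : IsProb p) (hq : IsProb q) (hqfull : ∀ i, 0 < q i) (hpq : p ≠ q)
    (α : ℝ) (hα : α ≠ 0) (δ : ℝ) (hδ0 : 0 < δ) (hδ1 : δ < 1) :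
    renyiD α (fun i => (1 - δ) * p i + δ * q i) q < renyiD α p q := by
  obtain ⟨hp0, hp1⟩ := hp
  obtain ⟨hq0, hq1⟩ := hq
  obtain ⟨i₀, hi₀⟩ : ∃ i, p i ≠ q i := Function.ne_iff.mp hpq
  set m : Fin k → ℝ := fun i => (1 - δ) * p i + δ * q i with hm
  have hm0 : ∀ i, 0 < m i := fun i => by
    have h1 : 0 ≤ (1 - δ) * p i := mul_nonneg (by linarith) (hp0 i)
    have h2 : 0 < δ * q i := mul_pos hδ0 (hqfull i)
    simpa [hm] using add_pos_of_nonneg_of_pos h1 h2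
  have hm1 : ∑ i, m i = 1 := by
    simp only [hm, Finset.sum_add_distrib, ← Finset.mul_sum, hp1, hq1]
    ring
  have hmq : ∀ i, m i ≠ q i → p i ≠ q i := fun i h h' => h (by simp only [hm, h']; ring)
  have hmi₀ : m i₀ ≠ q i₀ := by
    intro h
    apply hi₀
    have : (1 - δ) * p i₀ = (1 - δ) * q i₀ := by
      have := h; simp only [hm] at this; linarith
    exact mul_left_cancel₀ (by linarith : (1:ℝ) - δ ≠ 0) this
  have hsq : ∑ i, q i ^ α * q i ^ (1 - α) = 1 := aux_sum_q_self q hqfull hq1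
  rcases lt_trichotomy α 0 with hneg | h0 | hpos
  · -- α < 0
    by_cases hpfull : ∀ i, 0 < p i
    · -- finite, convex case on Ioi 0
      have hα1 : α ≠ 1 := by linarith
      have hf := aux_strictConvexOn_rpow_neg hneg
      have hsp : 0 < ∑ i, p i ^ α * q i ^ (1 - α) := aux_sum_rpow_pos α p q hp0 hp1 hqfull
      have hsm : 0 < ∑ i, m i ^ α * q i ^ (1 - α) :=
        aux_sum_rpow_pos α m q (fun i => (hm0 i).le) hm1 hqfull
      have hJ : 1 ≤ ∑ i, p i ^ α * q i ^ (1 - α) :=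
        aux_one_le_sum_rpow hf.convexOn p q hp0 hp1 hqfull hq1
          (fun i => Set.mem_Ioi.mpr (div_pos (hpfull i) (hqfull i)))
      have hmix := aux_sum_mix_lt hf p q hqfull (fun i => hpfull i) (fun i => hqfull i)
        i₀ hi₀ hδ0 hδ1
      rw [hsq] at hmix
      have hlt : ∑ i, m i ^ α * q i ^ (1 - α) < ∑ i, p i ^ α * q i ^ (1 - α) := by
        calc ∑ i, m i ^ α * q i ^ (1 - α)
            < (1 - δ) * (∑ i, p i ^ α * q i ^ (1 - α)) + δ * 1 := hmix
          _ ≤ ∑ i, p i ^ α * q i ^ (1 - α) := by nlinarith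
      rw [aux_renyiD_eq α hα hα1 m q (fun i => (hm0 i).le) hqfull (fun i => Or.inl (hm0 i)) hsm,
        aux_renyiD_eq α hα hα1 p q hp0 hqfull (fun i => Or.inl (hpfull i)) hsp]
      rw [EReal.coe_lt_coe_iff]
      have hc : 0 < Real.sign α / (α - 1) := by
        rw [Real.sign_of_neg hneg]
        apply div_pos_of_neg_of_neg <;> linarith
      exact mul_lt_mul_of_pos_left (Real.log_lt_log hsm hlt) hc
    · -- RHS is ⊤
      push_neg at hpfull
      obtain ⟨j, hj⟩ := hpfull
      have hj0 : p j = 0 := le_antisymm hj (hp0 j)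
      have hα1 : α ≠ 1 := by linarith
      have htop : renyiD α p q = ⊤ := by
        rw [renyiD, if_neg hα, if_neg hα1]
        have hterm : (ENNReal.ofReal (p j)) ^ α * (ENNReal.ofReal (q j)) ^ (1 - α) = ⊤ := by
          rw [hj0, ENNReal.ofReal_zero, ENNReal.zero_rpow_of_neg hneg]
          refine ENNReal.top_mul ?_
          exact (ENNReal.rpow_pos (ENNReal.ofReal_pos.mpr (hqfull j)) ENNReal.ofReal_ne_top).ne'
        have hsum : (∑ i, (ENNReal.ofReal (p i)) ^ α * (ENNReal.ofReal (q i)) ^ (1 - α)) = ⊤ :=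
          ENNReal.sum_eq_top.mpr ⟨j, Finset.mem_univ j, hterm⟩
        rw [hsum, elog, if_neg (by simp), if_pos rfl]
        apply EReal.coe_mul_top_of_pos
        rw [Real.sign_of_neg hneg]
        apply div_pos_of_neg_of_neg <;> linarith
      have hsm : 0 < ∑ i, m i ^ α * q i ^ (1 - α) :=
        aux_sum_rpow_pos α m q (fun i => (hm0 i).le) hm1 hqfull
      rw [htop, aux_renyiD_eq α hα hα1 m q (fun i => (hm0 i).le) hqfull
        (fun i => Or.inl (hm0 i)) hsm]
      exact EReal.coe_lt_top _
  · exact absurd h0 hα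
  · rcases lt_trichotomy α 1 with h01 | h1 | h1g
    · -- 0 < α < 1 : concave case
      have hα1 : α ≠ 1 := ne_of_lt h01
      have hf := Real.strictConcaveOn_rpow hpos h01
      have hsp : 0 < ∑ i, p i ^ α * q i ^ (1 - α) := aux_sum_rpow_pos α p q hp0 hp1 hqfull
      have hsm : 0 < ∑ i, m i ^ α * q i ^ (1 - α) :=
        aux_sum_rpow_pos α m q (fun i => (hm0 i).le) hm1 hqfull
      have hJ : ∑ i, p i ^ α * q i ^ (1 - α) ≤ 1 :=
        aux_sum_rpow_le_one hf.concaveOn p q hp0 hp1 hqfull hq1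
          (fun i => Set.mem_Ici.mpr (div_nonneg (hp0 i) (hqfull i).le))
      have hmix := aux_sum_mix_gt hf p q hqfull
        (fun i => Set.mem_Ici.mpr (hp0 i)) (fun i => Set.mem_Ici.mpr (hqfull i).le)
        i₀ hi₀ hδ0 hδ1
      rw [hsq] at hmix
      have hlt : ∑ i, p i ^ α * q i ^ (1 - α) < ∑ i, m i ^ α * q i ^ (1 - α) := by
        calc ∑ i, p i ^ α * q i ^ (1 - α)
            ≤ (1 - δ) * (∑ i, p i ^ α * q i ^ (1 - α)) + δ * 1 := by nlinarith
          _ < ∑ i, m i ^ α * q i ^ (1 - α) := hmix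
      rw [aux_renyiD_eq α hα hα1 m q (fun i => (hm0 i).le) hqfull (fun i => Or.inr hpos) hsm,
        aux_renyiD_eq α hα hα1 p q hp0 hqfull (fun i => Or.inr hpos) hsp]
      rw [EReal.coe_lt_coe_iff]
      have hc : Real.sign α / (α - 1) < 0 := by
        rw [Real.sign_of_pos hpos]
        apply div_neg_of_pos_of_neg <;> linarith
      exact mul_lt_mul_of_neg_left (Real.log_lt_log hsp hlt) hc
    · -- α = 1 : KL case
      subst h1
      rw [renyiD, if_neg hα, if_pos rfl, renyiD, if_neg hα, if_pos rfl,
        EReal.coe_lt_coe_iff]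
      have hApm : ∀ i, m i / q i = (1 - δ) * (p i / q i) + δ := fun i => by
        simp only [hm]
        rw [add_div, mul_div_assoc, mul_div_assoc, div_self (hqfull i).ne', mul_one]
      have hAp := aux_kl_eq p q hp0 hqfull
      have hAm := aux_kl_eq m q (fun i => (hm0 i).le) hqfull
      rw [hAp, hAm]
      -- Jensen : ∑ q i * f (p i / q i) ≥ f 1 = 0
      have hsum : ∑ i, q i • (p i / q i) = 1 := by
        rw [← hp1]
        refine Finset.sum_congr rfl fun i _ => ?_
        rw [smul_eq_mul, mul_comm, div_mul_cancel₀ _ (hqfull i).ne']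
      have hJ : 0 ≤ ∑ i, q i * ((p i / q i) * Real.log (p i / q i)) := by
        have h := Real.strictConvexOn_mul_log.convexOn.map_sum_le (t := Finset.univ) (w := q)
          (p := fun i => p i / q i) (fun i _ => (hqfull i).le) hq1
          (fun i _ => Set.mem_Ici.mpr (div_nonneg (hp0 i) (hqfull i).le))
        rw [hsum] at h
        simpa [smul_eq_mul] using h
      -- strict mixing step
      have key : ∀ i, q i * ((m i / q i) * Real.log (m i / q i))
          ≤ (1 - δ) * (q i * ((p i / q i) * Real.log (p i / q i))) := fun i => by
        have h := Real.strictConvexOn_mul_log.convexOn.2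
          (Set.mem_Ici.mpr (div_nonneg (hp0 i) (hqfull i).le)) (Set.mem_Ici.mpr zero_le_one)
          (by linarith : (0:ℝ) ≤ 1 - δ) hδ0.le (by ring : (1 - δ) + δ = 1)
        simp only [smul_eq_mul, mul_one, Real.log_one, mul_zero, add_zero] at h
        rw [hApm i]
        calc q i * (((1 - δ) * (p i / q i) + δ) * Real.log ((1 - δ) * (p i / q i) + δ))
            ≤ q i * ((1 - δ) * ((p i / q i) * Real.log (p i / q i))) :=
              mul_le_mul_of_nonneg_left h (hqfull i).le
          _ = (1 - δ) * (q i * ((p i / q i) * Real.log (p i / q i))) := by ring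
      have hne : p i₀ / q i₀ ≠ 1 := fun h =>
        hi₀ ((div_eq_one_iff_eq (hqfull i₀).ne').mp h)
      have keystrict : q i₀ * ((m i₀ / q i₀) * Real.log (m i₀ / q i₀))
          < (1 - δ) * (q i₀ * ((p i₀ / q i₀) * Real.log (p i₀ / q i₀))) := by
        have h := Real.strictConvexOn_mul_log.2
          (Set.mem_Ici.mpr (div_nonneg (hp0 i₀) (hqfull i₀).le)) (Set.mem_Ici.mpr zero_le_one)
          hne (by linarith : (0:ℝ) < 1 - δ) hδ0 (by ring : (1 - δ) + δ = 1)
        simp only [smul_eq_mul, mul_one, Real.log_one, mul_zero, add_zero] at h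
        rw [hApm i₀]
        calc q i₀ * (((1 - δ) * (p i₀ / q i₀) + δ) * Real.log ((1 - δ) * (p i₀ / q i₀) + δ))
            < q i₀ * ((1 - δ) * ((p i₀ / q i₀) * Real.log (p i₀ / q i₀))) :=
              mul_lt_mul_of_pos_left h (hqfull i₀)
          _ = (1 - δ) * (q i₀ * ((p i₀ / q i₀) * Real.log (p i₀ / q i₀))) := by ring
      have hmix : ∑ i, q i * ((m i / q i) * Real.log (m i / q i))
          < (1 - δ) * ∑ i, q i * ((p i / q i) * Real.log (p i / q i)) := by
        rw [Finset.mul_sum]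
        exact Finset.sum_lt_sum (fun i _ => key i) ⟨i₀, Finset.mem_univ _, keystrict⟩
      nlinarith
    · -- α > 1 : convex case
      have hα1 : α ≠ 1 := ne_of_gt h1g
      have hf := strictConvexOn_rpow h1g
      have hsp : 0 < ∑ i, p i ^ α * q i ^ (1 - α) := aux_sum_rpow_pos α p q hp0 hp1 hqfull
      have hsm : 0 < ∑ i, m i ^ α * q i ^ (1 - α) :=
        aux_sum_rpow_pos α m q (fun i => (hm0 i).le) hm1 hqfull
      have hJ : 1 ≤ ∑ i, p i ^ α * q i ^ (1 - α) :=
        aux_one_le_sum_rpow hf.convexOn p q hp0 hp1 hqfull hq1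
          (fun i => Set.mem_Ici.mpr (div_nonneg (hp0 i) (hqfull i).le))
      have hmix := aux_sum_mix_lt hf p q hqfull
        (fun i => Set.mem_Ici.mpr (hp0 i)) (fun i => Set.mem_Ici.mpr (hqfull i).le)
        i₀ hi₀ hδ0 hδ1
      rw [hsq] at hmix
      have hlt : ∑ i, m i ^ α * q i ^ (1 - α) < ∑ i, p i ^ α * q i ^ (1 - α) := by
        calc ∑ i, m i ^ α * q i ^ (1 - α)
            < (1 - δ) * (∑ i, p i ^ α * q i ^ (1 - α)) + δ * 1 := hmix
          _ ≤ ∑ i, p i ^ α * q i ^ (1 - α) := by nlinarith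
      rw [aux_renyiD_eq α hα hα1 m q (fun i => (hm0 i).le) hqfull (fun i => Or.inr hpos) hsm,
        aux_renyiD_eq α hα hα1 p q hp0 hqfull (fun i => Or.inr hpos) hsp]
      rw [EReal.coe_lt_coe_iff]
      have hc : 0 < Real.sign α / (α - 1) := by
        rw [Real.sign_of_pos hpos]
        apply div_pos <;> linarith
      exact mul_lt_mul_of_pos_left (Real.log_lt_log hsm hlt) hc

end
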